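/- The resolution product f_φ * f_ψ equals the characteristic polynomial of the tensor product: f_φ * f_ψ = f_{φ⊗ψ}, where if f_φ = ∏_i (z₀ + α_i·s) and f_ψ = ∏_j (z₀ + β_j·s) with s = √(z₁² + z₂z₃), then f_φ * f_ψ := ∏_{i,j} (z₀ + (α_i + β_j)·s). -/

import Mathlib

open Matrix Kronecker

-- Auxiliary section
section Aux

open Polynomial Finset

variable {ι : Type*} [Fintype ι] [DecidableEq ι]

lemma eval_charpoly' (M : Matrix ι ι ℂ) (t : ℂ) :
    M.charpoly.eval t = (t • (1 : Matrix ι ι ℂ) - M).det := by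
  rw [Matrix.charpoly, ← coe_evalRingHom, RingHom.map_det]
  congr 1
  ext i j
  by_cases h : i = j <;>
    simp [h, Matrix.charmatrix_apply, Matrix.one_apply, Matrix.diagonal_apply,
      Matrix.smul_apply, Matrix.sub_apply]

lemma isNilpotent_of_det (M : Matrix ι ι ℂ) {p : ℕ}
    (h : ∀ u : ℂ, (u • (1 : Matrix ι ι ℂ) - M).det = u ^ p) : IsNilpotent M := by
  have hc : M.charpoly = X ^ p := by
    apply Polynomial.funext
    intro t
    rw [eval_charpoly', h]
    simp
  refine ⟨p, ?_⟩
  have := M.aeval_self_charpoly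
  rwa [hc, map_pow, aeval_X] at this

lemma det_of_isNilpotent {M : Matrix ι ι ℂ} (h : IsNilpotent M) (u : ℂ) :
    (u • (1 : Matrix ι ι ℂ) - M).det = u ^ Fintype.card ι := by
  rcases isEmpty_or_nonempty ι with hι | hι
  · simp [Matrix.det_isEmpty]
  have hmono := M.charpoly_monic
  have hsp : M.charpoly.Splits := IsAlgClosed.splits _
  have heq := hsp.eq_prod_roots_of_monic hmono
  have hroots : ∀ r ∈ M.charpoly.roots, r = 0 := by
    intro r hr
    by_contra hr0
    have hz : M.charpoly.eval r = 0 := by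
      have := Polynomial.isRoot_of_mem_roots hr
      exact this
    rw [eval_charpoly'] at hz
    have hfac : r • (1 : Matrix ι ι ℂ) - M = r • ((1 : Matrix ι ι ℂ) - r⁻¹ • M) := by
      rw [smul_sub, smul_smul, mul_inv_cancel₀ hr0, one_smul]
    rw [hfac, Matrix.det_smul] at hz
    have hunit : IsUnit ((1 : Matrix ι ι ℂ) - r⁻¹ • M) :=
      (h.smul r⁻¹).isUnit_one_sub
    have hdet : ((1 : Matrix ι ι ℂ) - r⁻¹ • M).det ≠ 0 := by
      have := (Matrix.isUnit_iff_isUnit_det _).mp hunit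
      exact this.ne_zero
    exact (mul_ne_zero (pow_ne_zero _ hr0) hdet) hz
  have hcard : Multiset.card M.charpoly.roots = Fintype.card ι := by
    rw [(Polynomial.splits_iff_card_roots).mp hsp, Matrix.charpoly_natDegree_eq_dim]
  have hrepl : M.charpoly.roots = Multiset.replicate (Fintype.card ι) 0 :=
    Multiset.eq_replicate.mpr ⟨hcard, hroots⟩
  have hX : M.charpoly = X ^ Fintype.card ι := by
    rw [heq, hrepl]
    simp [Multiset.map_replicate, Multiset.prod_replicate]
  have := congrArg (Polynomial.eval u) hX
  rw [eval_charpoly'] at this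
  simpa using this

lemma comm_pow_formula (N M M₁ M₂ : Matrix ι ι ℂ)
    (h1 : N * M = M * N + M₁) (h2 : N * M₁ = M₁ * N + M₂) (h3 : N * M₂ = M₂ * N) :
    ∀ k : ℕ, N ^ (k + 2) * M = M * N ^ (k + 2) + ((k : ℂ) + 2) • (M₁ * N ^ (k + 1))
      + ((((k : ℂ) + 2) * ((k : ℂ) + 1)) / 2) • (M₂ * N ^ k) := by
  intro k
  induction k with
  | zero =>
    have hsq : N ^ 2 * M = N * (N * M) := by rw [pow_two, mul_assoc]
    rw [hsq, h1, mul_add, ← mul_assoc, h1, h2]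
    push_cast
    have hN2 : N * N = N ^ 2 := (pow_two N).symm
    rw [add_mul, add_mul, mul_assoc, hN2]
    norm_num
    match_scalars <;> ring
  | succ k ih =>
    have hp : N ^ (k + 3) * M = N * (N ^ (k + 2) * M) := by
      rw [← mul_assoc, ← pow_succ']
    rw [hp, ih]
    rw [mul_add, mul_add, mul_smul_comm, mul_smul_comm, ← mul_assoc, h1, ← mul_assoc, h2,
      ← mul_assoc, h3]
    push_cast
    rw [add_mul, add_mul]
    have e1 : M * N * N ^ (k+2) = M * N ^ (k+3) := by rw [mul_assoc, ← pow_succ']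
    have e2 : M₁ * N * N ^ (k+1) = M₁ * N ^ (k+2) := by rw [mul_assoc, ← pow_succ']
    have e3 : M₂ * N * N ^ k = M₂ * N ^ (k+1) := by rw [mul_assoc, ← pow_succ']
    rw [e1, e2, e3]
    match_scalars <;> ring

lemma det_move {N M M₁ M₂ : Matrix ι ι ℂ} (hN : IsNilpotent N)
    (h1 : N * M = M * N + M₁) (h2 : N * M₁ = M₁ * N + M₂) (h3 : N * M₂ = M₂ * N) :
    M.det = (M + M₁ + (2 : ℂ)⁻¹ • M₂).det := by
  obtain ⟨K, hK⟩ := hN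
  have hKpow : ∀ j, K ≤ j → N ^ j = 0 := fun j hj => pow_eq_zero_of_le hj hK
  set g : Matrix ι ι ℂ := ∑ k ∈ range (K + 2), ((k.factorial : ℂ))⁻¹ • N ^ k with hg
  have hsplit : ∀ f : ℕ → Matrix ι ι ℂ, ∑ k ∈ range (K + 2), f k
      = (∑ k ∈ range K, f (k + 2)) + f 1 + f 0 := by
    intro f
    rw [Finset.sum_range_succ' f (K+1), Finset.sum_range_succ' (fun i => f (i+1)) K]
  have key : g * M = (M + M₁ + (2 : ℂ)⁻¹ • M₂) * g := by
    have expand : g * M = ∑ k ∈ range (K + 2), ((k.factorial : ℂ))⁻¹ • (N ^ k * M) := by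
      rw [hg, Finset.sum_mul]
      exact Finset.sum_congr rfl fun k _ => smul_mul_assoc _ _ _
    rw [expand, hsplit]
    have hterm : ∀ k ∈ range K, (((k+2).factorial : ℂ))⁻¹ • (N ^ (k+2) * M)
        = ((k+2).factorial : ℂ)⁻¹ • (M * N ^ (k+2))
          + ((k+1).factorial : ℂ)⁻¹ • (M₁ * N ^ (k+1))
          + ((2 : ℂ)⁻¹ * (k.factorial : ℂ)⁻¹) • (M₂ * N ^ k) := by
      intro k _
      rw [comm_pow_formula N M M₁ M₂ h1 h2 h3 k]
      have hf2 : ((k+2).factorial : ℂ) = ((k:ℂ)+2) * ((k:ℂ)+1) * (k.factorial : ℂ) := by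
        rw [Nat.factorial_succ, Nat.factorial_succ]
        push_cast; ring
      have hf1 : ((k+1).factorial : ℂ) = ((k:ℂ)+1) * (k.factorial : ℂ) := by
        rw [Nat.factorial_succ]; push_cast; ring
      have hne : (k.factorial : ℂ) ≠ 0 := Nat.cast_ne_zero.mpr k.factorial_ne_zero
      have hk1 : ((k:ℂ)+1) ≠ 0 := Nat.cast_add_one_ne_zero k
      have hk2 : ((k:ℂ)+2) ≠ 0 := by
        have h := Nat.cast_add_one_ne_zero (R := ℂ) (k+1)
        push_cast at h
        intro hcon
        exact h (by linear_combination hcon)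
      have s1 : ((k+2).factorial : ℂ)⁻¹ * ((k:ℂ)+2) = ((k+1).factorial : ℂ)⁻¹ := by
        rw [hf2, hf1]; field_simp
      have s2 : ((k+2).factorial : ℂ)⁻¹ * ((((k:ℂ)+2)*((k:ℂ)+1))/2) =
          (2:ℂ)⁻¹ * (k.factorial:ℂ)⁻¹ := by
        rw [hf2]; field_simp
      rw [smul_add, smul_add, smul_smul, smul_smul, s1, s2]
    rw [Finset.sum_congr rfl hterm]
    have hsum3 : ∑ k ∈ range K, (((k+2).factorial : ℂ)⁻¹ • (M * N ^ (k+2))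
          + ((k+1).factorial : ℂ)⁻¹ • (M₁ * N ^ (k+1))
          + ((2:ℂ)⁻¹ * (k.factorial : ℂ)⁻¹) • (M₂ * N ^ k))
        = (∑ k ∈ range K, ((k+2).factorial : ℂ)⁻¹ • (M * N ^ (k+2)))
          + (∑ k ∈ range K, ((k+1).factorial : ℂ)⁻¹ • (M₁ * N ^ (k+1)))
          + (2:ℂ)⁻¹ • (∑ k ∈ range K, (k.factorial : ℂ)⁻¹ • (M₂ * N ^ k)) := by
      rw [Finset.sum_add_distrib, Finset.sum_add_distrib, Finset.smul_sum]
      congr 1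
      exact Finset.sum_congr rfl fun k _ => mul_smul _ _ _
    rw [hsum3]
    have hMg : M * g = (∑ k ∈ range K, ((k+2).factorial : ℂ)⁻¹ • (M * N ^ (k+2)))
        + ((1:ℕ).factorial : ℂ)⁻¹ • (M * N ^ 1) + ((0:ℕ).factorial : ℂ)⁻¹ • (M * N ^ 0) := by
      rw [hg, Finset.mul_sum]
      simp only [mul_smul_comm]
      exact hsplit _
    have hM1g : M₁ * g = (∑ k ∈ range K, ((k+1).factorial : ℂ)⁻¹ • (M₁ * N ^ (k+1)))
        + ((0:ℕ).factorial : ℂ)⁻¹ • (M₁ * N ^ 0) := by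
      rw [hg, Finset.mul_sum]
      simp only [mul_smul_comm]
      rw [Finset.sum_range_succ' (fun k => ((k.factorial : ℂ))⁻¹ • (M₁ * N ^ k)) (K+1)]
      congr 1
      rw [Finset.sum_range_succ]
      simp [hKpow (K+1) (Nat.le_succ K)]
    have hM2g : M₂ * g = ∑ k ∈ range K, (k.factorial : ℂ)⁻¹ • (M₂ * N ^ k) := by
      rw [hg, Finset.mul_sum]
      simp only [mul_smul_comm]
      rw [Finset.sum_range_succ, Finset.sum_range_succ]
      simp [hK, hKpow (K+1) (Nat.le_succ K)]
    rw [add_mul, add_mul, smul_mul_assoc, hMg, hM1g, hM2g]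
    simp only [pow_zero, pow_one, Nat.factorial_zero, Nat.factorial_one, Nat.cast_one,
      inv_one, one_smul, Matrix.mul_one, Matrix.one_mul]
    rw [h1]
    module
  set h : Matrix ι ι ℂ := ∑ k ∈ range (K+1), (((k+1).factorial : ℂ))⁻¹ • N ^ k with hh
  have hgform : g = 1 + N * h := by
    rw [hg, hh, Finset.sum_range_succ' (fun k => ((k.factorial : ℂ))⁻¹ • N ^ k) (K+1),
      Finset.mul_sum]
    simp only [mul_smul_comm, ← pow_succ']
    simp only [Nat.factorial_zero, Nat.cast_one, inv_one, pow_zero, one_smul]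
    rw [add_comm]
  have hcomm : Commute N h :=
    Commute.sum_right _ _ _ fun k _ => ((Commute.refl N).pow_right k).smul_right _
  have hnilNh : IsNilpotent (N * h) := hcomm.isNilpotent_mul_right ⟨K, hK⟩
  have hunit : IsUnit g := by rw [hgform]; exact hnilNh.isUnit_one_add
  have hdg : g.det ≠ 0 := ((Matrix.isUnit_iff_isUnit_det g).mp hunit).ne_zero
  have hdet := congrArg Matrix.det key
  rw [Matrix.det_mul, Matrix.det_mul] at hdet
  rw [mul_comm] at hdet
  exact mul_right_cancel₀ hdg hdet

lemma sl2_e_move {A B C : Matrix ι ι ℂ}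
    (hBC : B * C - C * B = A) (hAB : A * B - B * A = (2 : ℂ) • B) (hB : IsNilpotent B)
    (z₀ z₁ z₂ z₃ u : ℂ) :
    (z₀ • (1 : Matrix ι ι ℂ) + z₁ • A + z₂ • B + z₃ • C).det
      = (z₀ • (1 : Matrix ι ι ℂ) + (z₁ + u * z₃) • A
          + (z₂ - 2 * u * z₁ - u ^ 2 * z₃) • B + z₃ • C).det := by
  have hBA : B * A = A * B - (2 : ℂ) • B := by rw [← hAB]; abel
  have hCB : C * B = B * C - A := by rw [← hBC]; abel
  have h1 : (u • B) * (z₀ • (1 : Matrix ι ι ℂ) + z₁ • A + z₂ • B + z₃ • C)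
      = (z₀ • (1 : Matrix ι ι ℂ) + z₁ • A + z₂ • B + z₃ • C) * (u • B)
        + ((u * z₃) • A + (-(2 * u * z₁)) • B) := by
    simp only [mul_add, add_mul, mul_smul_comm, smul_mul_assoc, Matrix.mul_one, Matrix.one_mul,
      hBA, hCB]
    match_scalars <;> ring
  have h2 : (u • B) * ((u * z₃) • A + (-(2 * u * z₁)) • B)
      = ((u * z₃) • A + (-(2 * u * z₁)) • B) * (u • B) + (-(2 * u ^ 2 * z₃)) • B := by
    simp only [mul_add, add_mul, mul_smul_comm, smul_mul_assoc, hBA]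
    match_scalars <;> ring
  have h3 : (u • B) * ((-(2 * u ^ 2 * z₃)) • B) = ((-(2 * u ^ 2 * z₃)) • B) * (u • B) := by
    simp only [mul_smul_comm, smul_mul_assoc]
    rw [smul_comm]
  have := det_move (hB.smul u) h1 h2 h3
  rw [this]
  congr 1
  match_scalars <;> ring

lemma sl2_f_move {A B C : Matrix ι ι ℂ}
    (hBC : B * C - C * B = A) (hAC : A * C - C * A = (-2 : ℂ) • C) (hC : IsNilpotent C)
    (z₀ z₁ z₂ z₃ v : ℂ) :
    (z₀ • (1 : Matrix ι ι ℂ) + z₁ • A + z₂ • B + z₃ • C).det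
      = (z₀ • (1 : Matrix ι ι ℂ) + (z₁ - v * z₂) • A + z₂ • B
          + (z₃ + 2 * v * z₁ - v ^ 2 * z₂) • C).det := by
  have hBC' : C * B - B * C = -A := by rw [← hBC]; abel
  have hAC' : (-A) * C - C * (-A) = (2 : ℂ) • C := by
    have : (-A) * C - C * (-A) = -(A * C - C * A) := by
      simp [neg_mul, mul_neg]; abel
    rw [this, hAC]
    match_scalars <;> ring
  have key := sl2_e_move hBC' hAC' hC z₀ (-z₁) z₃ z₂ v
  have e1 : z₀ • (1 : Matrix ι ι ℂ) + (-z₁) • (-A) + z₃ • C + z₂ • B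
      = z₀ • (1 : Matrix ι ι ℂ) + z₁ • A + z₂ • B + z₃ • C := by
    match_scalars <;> ring
  have e2 : z₀ • (1 : Matrix ι ι ℂ) + (-z₁ + v * z₂) • (-A)
        + (z₃ - 2 * v * (-z₁) - v ^ 2 * z₂) • C + z₂ • B
      = z₀ • (1 : Matrix ι ι ℂ) + (z₁ - v * z₂) • A + z₂ • B
        + (z₃ + 2 * v * z₁ - v ^ 2 * z₂) • C := by
    match_scalars <;> ring
  rw [e1, e2] at key
  exact key

lemma detK : ∀ (k : ℕ) (A : Matrix (Fin k) (Fin k) ℂ) (α : Fin k → ℂ),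
    (∀ u : ℂ, (u • (1 : Matrix (Fin k) (Fin k) ℂ) - A).det = ∏ i, (u - α i)) →
    ∀ (m : ℕ) (B : Matrix (Fin m) (Fin m) ℂ) (t : ℂ),
      (t • (1 : Matrix (Fin k × Fin m) (Fin k × Fin m) ℂ)
        - (A ⊗ₖ (1 : Matrix (Fin m) (Fin m) ℂ) + (1 : Matrix (Fin k) (Fin k) ℂ) ⊗ₖ B)).det
      = ∏ i, ((t - α i) • (1 : Matrix (Fin m) (Fin m) ℂ) - B).det := by
  intro k
  induction k with
  | zero =>
    intro A α hA m B t
    haveI : IsEmpty (Fin 0 × Fin m) := ⟨fun p => p.1.elim0⟩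
    simp [Matrix.det_isEmpty]
  | succ k IH =>
    intro A α hA m B t
    -- eigenvector for α 0
    have hdet0 : ((α 0) • (1 : Matrix (Fin (k+1)) (Fin (k+1)) ℂ) - A).det = 0 := by
      rw [hA]
      exact Finset.prod_eq_zero (Finset.mem_univ 0) (by ring)
    obtain ⟨v, hv0, hveq⟩ := (Matrix.exists_mulVec_eq_zero_iff).mpr hdet0
    have hAv : A.mulVec v = (α 0) • v := by
      have h := hveq
      rw [Matrix.sub_mulVec, Matrix.smul_mulVec, Matrix.one_mulVec] at h
      have := sub_eq_zero.mp h
      exact this.symm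
    obtain ⟨i₀, hvi₀⟩ := Function.ne_iff.mp hv0
    have hvi₀' : v i₀ ≠ 0 := by simpa using hvi₀
    set P : Matrix (Fin (k+1)) (Fin (k+1)) ℂ := (1 : Matrix _ _ ℂ).updateCol i₀ v with hP
    have hPdet : P.det = v i₀ := by
      rw [hP, ← Matrix.cramer_apply, Matrix.cramer_one]
      rfl
    have hPunit : IsUnit P.det := isUnit_iff_ne_zero.mpr (hPdet ▸ hvi₀')
    have hPcol : P.mulVec (Pi.single i₀ 1) = v := by
      funext r
      rw [Matrix.mulVec_single]
      simp [hP, Matrix.updateCol_self]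
    set B₁ : Matrix (Fin (k+1)) (Fin (k+1)) ℂ := P⁻¹ * A * P with hB₁
    have hB₁col : ∀ r, B₁ r i₀ = if r = i₀ then α 0 else 0 := by
      have hvec : B₁.mulVec (Pi.single i₀ 1) = (α 0) • (Pi.single i₀ 1 : Fin (k+1) → ℂ) := by
        rw [hB₁, ← Matrix.mulVec_mulVec, ← Matrix.mulVec_mulVec, hPcol, hAv,
          Matrix.mulVec_smul]
        congr 1
        rw [← hPcol, Matrix.mulVec_mulVec, Matrix.nonsing_inv_mul _ hPunit,
          Matrix.one_mulVec]
      intro r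
      have := congrFun hvec r
      rw [Matrix.mulVec_single] at this
      simpa [Pi.single_apply, eq_comm] using this
    have hsim : ∀ u : ℂ, (u • (1 : Matrix (Fin (k+1)) (Fin (k+1)) ℂ) - B₁).det
        = (u • (1 : Matrix (Fin (k+1)) (Fin (k+1)) ℂ) - A).det := by
      intro u
      have hfac : u • (1 : Matrix (Fin (k+1)) (Fin (k+1)) ℂ) - B₁
          = P⁻¹ * (u • (1 : Matrix (Fin (k+1)) (Fin (k+1)) ℂ) - A) * P := by
        rw [hB₁, Matrix.mul_sub, Matrix.sub_mul]
        congr 1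
        rw [Matrix.mul_smul, Matrix.smul_mul, Matrix.mul_one, Matrix.nonsing_inv_mul _ hPunit]
      rw [hfac, Matrix.det_mul, Matrix.det_mul, mul_comm, ← mul_assoc, ← Matrix.det_mul,
        Matrix.mul_nonsing_inv _ hPunit]
      simp
    set A' : Matrix (Fin k) (Fin k) ℂ := B₁.submatrix i₀.succAbove i₀.succAbove with hA'def
    have hfac : ∀ u : ℂ, (u • (1 : Matrix (Fin (k+1)) (Fin (k+1)) ℂ) - B₁).det
        = (u - α 0) * (u • (1 : Matrix (Fin k) (Fin k) ℂ) - A').det := by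
      intro u
      rw [Matrix.det_succ_column _ i₀, Finset.sum_eq_single i₀]
      · have hent : (u • (1 : Matrix (Fin (k+1)) (Fin (k+1)) ℂ) - B₁) i₀ i₀ = u - α 0 := by
          simp [Matrix.sub_apply, Matrix.smul_apply, Matrix.one_apply, hB₁col i₀]
        have hsub : (u • (1 : Matrix (Fin (k+1)) (Fin (k+1)) ℂ) - B₁).submatrix
            i₀.succAbove i₀.succAbove = u • (1 : Matrix (Fin k) (Fin k) ℂ) - A' := by
          ext r r'
          simp [Matrix.submatrix_apply, Matrix.sub_apply, Matrix.smul_apply, Matrix.one_apply,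
            Fin.succAbove_right_inj, hA'def]
        rw [hent, hsub]
        have : (-1 : ℂ) ^ ((i₀ : ℕ) + (i₀ : ℕ)) = 1 := Even.neg_one_pow ⟨i₀, rfl⟩
        rw [this]
        ring
      · intro r _ hr
        have : (u • (1 : Matrix (Fin (k+1)) (Fin (k+1)) ℂ) - B₁) r i₀ = 0 := by
          simp [Matrix.sub_apply, Matrix.smul_apply, Matrix.one_apply, hB₁col r, hr]
        rw [this]
        ring
      · intro h
        exact absurd (Finset.mem_univ i₀) h
    have hA' : ∀ u : ℂ, (u • (1 : Matrix (Fin k) (Fin k) ℂ) - A').det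
        = ∏ i : Fin k, (u - α i.succ) := by
      have hpoly : A'.charpoly = ∏ i : Fin k, (X - Polynomial.C (α i.succ)) := by
        apply Polynomial.eq_of_infinite_eval_eq
        apply Set.Infinite.mono _ ((Set.finite_singleton (α 0)).infinite_compl)
        intro u hu
        have hu' : u ≠ α 0 := hu
        have h1 : (u - α 0) * (u • (1 : Matrix (Fin k) (Fin k) ℂ) - A').det
            = (u - α 0) * ∏ i : Fin k, (u - α i.succ) := by
          rw [← hfac u, hsim u, hA u, Fin.prod_univ_succ]
        have h2 := mul_left_cancel₀ (sub_ne_zero.mpr hu') h1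
        rw [Set.mem_setOf_eq, eval_charpoly', h2, Polynomial.eval_prod]
        simp
      intro u
      have := congrArg (Polynomial.eval u) hpoly
      rw [eval_charpoly', Polynomial.eval_prod] at this
      simpa using this
    -- conjugate back to A and split off the i₀ block
    have hsome : ∀ r : Fin k, finSuccEquiv' i₀ (i₀.succAbove r) = some r := fun r => by
      have h2 := (finSuccEquiv' i₀).apply_symm_apply (some r)
      rwa [finSuccEquiv'_symm_some] at h2
    have hnone : finSuccEquiv' i₀ i₀ = none := by
      have h2 := (finSuccEquiv' i₀).apply_symm_apply none
      rwa [finSuccEquiv'_symm_none] at h2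
    set E : (Fin k × Fin m) ⊕ Fin m ≃ Fin (k+1) × Fin m :=
      { toFun := Sum.elim (fun p => (i₀.succAbove p.1, p.2)) (fun j => (i₀, j)),
        invFun := fun q => (finSuccEquiv' i₀ q.1).elim (Sum.inr q.2) (fun r => Sum.inl (r, q.2)),
        left_inv := by
          rintro (⟨r, j⟩ | j) <;> simp [hsome, hnone]
        right_inv := by
          rintro ⟨x, j⟩
          rcases h : finSuccEquiv' i₀ x with _ | r
          · have hx : x = i₀ := by
              have h2 := congrArg (finSuccEquiv' i₀).symm h
              rwa [Equiv.symm_apply_apply, finSuccEquiv'_symm_none] at h2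
            simp [h, hx]
          · have hx : x = i₀.succAbove r := by
              have h2 := congrArg (finSuccEquiv' i₀).symm h
              rwa [Equiv.symm_apply_apply, finSuccEquiv'_symm_some] at h2
            simp [h, hx] } with hE
    have hblocks : (t • (1 : Matrix (Fin (k+1) × Fin m) (Fin (k+1) × Fin m) ℂ)
          - (B₁ ⊗ₖ (1 : Matrix (Fin m) (Fin m) ℂ)
            + (1 : Matrix (Fin (k+1)) (Fin (k+1)) ℂ) ⊗ₖ B)).submatrix E E
        = Matrix.fromBlocks
            (t • (1 : Matrix (Fin k × Fin m) (Fin k × Fin m) ℂ)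
              - (A' ⊗ₖ (1 : Matrix (Fin m) (Fin m) ℂ)
                + (1 : Matrix (Fin k) (Fin k) ℂ) ⊗ₖ B))
            0
            (Matrix.of fun (j : Fin m) (q : Fin k × Fin m) =>
              - (B₁ i₀ (i₀.succAbove q.1) * (1 : Matrix (Fin m) (Fin m) ℂ) j q.2))
            ((t - α 0) • (1 : Matrix (Fin m) (Fin m) ℂ) - B) := by
      ext x y
      rcases x with ⟨r, j⟩ | j <;> rcases y with ⟨r', j'⟩ | j'
      · simp only [Matrix.submatrix_apply, hE, Equiv.coe_fn_mk, Sum.elim_inl,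
          Matrix.fromBlocks_apply₁₁, Matrix.sub_apply, Matrix.smul_apply, Matrix.add_apply,
          Matrix.kroneckerMap_apply, Matrix.one_apply, hA'def, Matrix.submatrix_apply,
          Prod.mk.injEq, Fin.succAbove_right_inj, smul_eq_mul]
      · simp only [Matrix.submatrix_apply, hE, Equiv.coe_fn_mk, Sum.elim_inl, Sum.elim_inr,
          Matrix.fromBlocks_apply₁₂, Matrix.sub_apply, Matrix.smul_apply, Matrix.add_apply,
          Matrix.kroneckerMap_apply, Matrix.one_apply, Matrix.zero_apply, Prod.mk.injEq,
          smul_eq_mul]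
        have h1 : i₀.succAbove r ≠ i₀ := Fin.succAbove_ne i₀ r
        rw [hB₁col]
        simp [h1]
      · simp only [Matrix.submatrix_apply, hE, Equiv.coe_fn_mk, Sum.elim_inl, Sum.elim_inr,
          Matrix.fromBlocks_apply₂₁, Matrix.sub_apply, Matrix.smul_apply, Matrix.add_apply,
          Matrix.kroneckerMap_apply, Matrix.one_apply, Matrix.of_apply, Prod.mk.injEq,
          smul_eq_mul]
        have h1 : i₀ ≠ i₀.succAbove r' := (Fin.succAbove_ne i₀ r').symm
        simp [h1]
      · simp only [Matrix.submatrix_apply, hE, Equiv.coe_fn_mk, Sum.elim_inr,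
          Matrix.fromBlocks_apply₂₂, Matrix.sub_apply, Matrix.smul_apply, Matrix.add_apply,
          Matrix.kroneckerMap_apply, Matrix.one_apply, Prod.mk.injEq, smul_eq_mul]
        rw [hB₁col]
        by_cases hj : j = j' <;> simp [hj] <;> ring
    have hbig : (t • (1 : Matrix (Fin (k+1) × Fin m) (Fin (k+1) × Fin m) ℂ)
          - (B₁ ⊗ₖ (1 : Matrix (Fin m) (Fin m) ℂ)
            + (1 : Matrix (Fin (k+1)) (Fin (k+1)) ℂ) ⊗ₖ B)).det
        = (t • (1 : Matrix (Fin k × Fin m) (Fin k × Fin m) ℂ)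
            - (A' ⊗ₖ (1 : Matrix (Fin m) (Fin m) ℂ)
              + (1 : Matrix (Fin k) (Fin k) ℂ) ⊗ₖ B)).det
          * ((t - α 0) • (1 : Matrix (Fin m) (Fin m) ℂ) - B).det := by
      rw [← Matrix.det_submatrix_equiv_self E, hblocks, Matrix.det_fromBlocks_zero₁₂]
    have hPB₁ : P * B₁ * P⁻¹ = A := by
      rw [hB₁]
      rw [← Matrix.mul_assoc, ← Matrix.mul_assoc, Matrix.mul_nonsing_inv _ hPunit,
        Matrix.one_mul, Matrix.mul_assoc, Matrix.mul_nonsing_inv _ hPunit, Matrix.mul_one]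
    have hker1 : (P ⊗ₖ (1 : Matrix (Fin m) (Fin m) ℂ)) * ((P⁻¹) ⊗ₖ 1) = 1 := by
      rw [← Matrix.mul_kronecker_mul, Matrix.mul_nonsing_inv _ hPunit, Matrix.mul_one,
        Matrix.one_kronecker_one]
    have hmid : t • (1 : Matrix (Fin (k+1) × Fin m) (Fin (k+1) × Fin m) ℂ)
          - (A ⊗ₖ (1 : Matrix (Fin m) (Fin m) ℂ)
            + (1 : Matrix (Fin (k+1)) (Fin (k+1)) ℂ) ⊗ₖ B)
        = (P ⊗ₖ 1) * (t • 1 - (B₁ ⊗ₖ (1 : Matrix (Fin m) (Fin m) ℂ)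
            + (1 : Matrix (Fin (k+1)) (Fin (k+1)) ℂ) ⊗ₖ B)) * ((P⁻¹) ⊗ₖ 1) := by
      rw [Matrix.mul_sub, Matrix.sub_mul, Matrix.mul_add, Matrix.add_mul]
      congr 1
      · rw [Matrix.mul_smul, Matrix.mul_one, Matrix.smul_mul, hker1]
      · congr 1
        · rw [← Matrix.mul_kronecker_mul, ← Matrix.mul_kronecker_mul, hPB₁]
          simp
        · rw [← Matrix.mul_kronecker_mul, ← Matrix.mul_kronecker_mul, Matrix.mul_one,
            Matrix.mul_nonsing_inv _ hPunit]
          simp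
    have hconj : (t • (1 : Matrix (Fin (k+1) × Fin m) (Fin (k+1) × Fin m) ℂ)
          - (A ⊗ₖ (1 : Matrix (Fin m) (Fin m) ℂ)
            + (1 : Matrix (Fin (k+1)) (Fin (k+1)) ℂ) ⊗ₖ B)).det
        = (t • (1 : Matrix (Fin (k+1) × Fin m) (Fin (k+1) × Fin m) ℂ)
          - (B₁ ⊗ₖ (1 : Matrix (Fin m) (Fin m) ℂ)
            + (1 : Matrix (Fin (k+1)) (Fin (k+1)) ℂ) ⊗ₖ B)).det := by
      rw [hmid, Matrix.det_mul, Matrix.det_mul]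
      have hone : (P ⊗ₖ (1 : Matrix (Fin m) (Fin m) ℂ)).det
          * ((P⁻¹) ⊗ₖ (1 : Matrix (Fin m) (Fin m) ℂ)).det = 1 := by
        rw [← Matrix.det_mul, hker1, Matrix.det_one]
      rw [mul_comm ((P ⊗ₖ (1 : Matrix (Fin m) (Fin m) ℂ)).det), mul_assoc, hone, mul_one]
    rw [hconj, hbig, IH A' (fun i => α i.succ) hA' m B t, Fin.prod_univ_succ, mul_comm]

end Aux

theorem resolution_product_eq_tensor_char_poly (n m : ℕ)
    (H E F : Matrix (Fin n) (Fin n) ℂ) (H' E' F' : Matrix (Fin m) (Fin m) ℂ)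
    (hEF : E * F - F * E = H)
    (hHE : H * E - E * H = (2 : ℂ) • E)
    (hHF : H * F - F * H = (-2 : ℂ) • F)
    (hEF' : E' * F' - F' * E' = H')
    (hHE' : H' * E' - E' * H' = (2 : ℂ) • E')
    (hHF' : H' * F' - F' * H' = (-2 : ℂ) • F')
    (α : Fin n → ℂ) (β : Fin m → ℂ)
    (hφ : ∀ z₀ z₁ z₂ z₃ s : ℂ, s ^ 2 = z₁ ^ 2 + z₂ * z₃ →
      (z₀ • (1 : Matrix (Fin n) (Fin n) ℂ) + z₁ • H + z₂ • E + z₃ • F).det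
        = ∏ i, (z₀ + α i * s))
    (hψ : ∀ z₀ z₁ z₂ z₃ s : ℂ, s ^ 2 = z₁ ^ 2 + z₂ * z₃ →
      (z₀ • (1 : Matrix (Fin m) (Fin m) ℂ) + z₁ • H' + z₂ • E' + z₃ • F').det
        = ∏ j, (z₀ + β j * s))
    (z₀ z₁ z₂ z₃ s : ℂ) (hs : s ^ 2 = z₁ ^ 2 + z₂ * z₃) :
    (z₀ • (1 : Matrix (Fin n × Fin m) (Fin n × Fin m) ℂ)
        + z₁ • (H ⊗ₖ (1 : Matrix (Fin m) (Fin m) ℂ) + (1 : Matrix (Fin n) (Fin n) ℂ) ⊗ₖ H')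
        + z₂ • (E ⊗ₖ (1 : Matrix (Fin m) (Fin m) ℂ) + (1 : Matrix (Fin n) (Fin n) ℂ) ⊗ₖ E')
        + z₃ • (F ⊗ₖ (1 : Matrix (Fin m) (Fin m) ℂ) + (1 : Matrix (Fin n) (Fin n) ℂ) ⊗ₖ F')).det
      = ∏ i, ∏ j, (z₀ + (α i + β j) * s) := by
  classical
  set X : Matrix (Fin n × Fin m) (Fin n × Fin m) ℂ :=
    H ⊗ₖ (1 : Matrix (Fin m) (Fin m) ℂ) + (1 : Matrix (Fin n) (Fin n) ℂ) ⊗ₖ H' with hX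
  set Y : Matrix (Fin n × Fin m) (Fin n × Fin m) ℂ :=
    E ⊗ₖ (1 : Matrix (Fin m) (Fin m) ℂ) + (1 : Matrix (Fin n) (Fin n) ℂ) ⊗ₖ E' with hY
  set Z : Matrix (Fin n × Fin m) (Fin n × Fin m) ℂ :=
    F ⊗ₖ (1 : Matrix (Fin m) (Fin m) ℂ) + (1 : Matrix (Fin n) (Fin n) ℂ) ⊗ₖ F' with hZ
  -- eigenvalue identities
  have hα : ∀ u : ℂ, (u • (1 : Matrix (Fin n) (Fin n) ℂ) - H).det = ∏ i, (u - α i) := by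
    intro u
    have hm : u • (1 : Matrix (Fin n) (Fin n) ℂ) - H
        = u • 1 + (-1 : ℂ) • H + (0:ℂ) • E + (0:ℂ) • F := by module
    rw [hm, hφ u (-1) 0 0 (-1) (by ring)]
    exact Finset.prod_congr rfl fun i _ => by ring
  have hβ : ∀ u : ℂ, (u • (1 : Matrix (Fin m) (Fin m) ℂ) - H').det = ∏ j, (u - β j) := by
    intro u
    have hm : u • (1 : Matrix (Fin m) (Fin m) ℂ) - H'
        = u • 1 + (-1 : ℂ) • H' + (0:ℂ) • E' + (0:ℂ) • F' := by module
    rw [hm, hψ u (-1) 0 0 (-1) (by ring)]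
    exact Finset.prod_congr rfl fun j _ => by ring
  have hXdet : ∀ t : ℂ, (t • (1 : Matrix (Fin n × Fin m) (Fin n × Fin m) ℂ) - X).det
      = ∏ i, ∏ j, (t - (α i + β j)) := by
    intro t
    rw [hX, detK n H α hα m H' t]
    refine Finset.prod_congr rfl fun i _ => ?_
    rw [hβ (t - α i)]
    exact Finset.prod_congr rfl fun j _ => by ring
  -- nilpotency of E, F, E', F'
  have hnE : IsNilpotent E := by
    refine isNilpotent_of_det E (p := n) fun u => ?_
    have hm : u • (1 : Matrix (Fin n) (Fin n) ℂ) - E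
        = u • 1 + (0:ℂ) • H + (-1 : ℂ) • E + (0:ℂ) • F := by module
    rw [hm, hφ u 0 (-1) 0 0 (by ring)]
    simp
  have hnF : IsNilpotent F := by
    refine isNilpotent_of_det F (p := n) fun u => ?_
    have hm : u • (1 : Matrix (Fin n) (Fin n) ℂ) - F
        = u • 1 + (0:ℂ) • H + (0:ℂ) • E + (-1 : ℂ) • F := by module
    rw [hm, hφ u 0 0 (-1) 0 (by ring)]
    simp
  have hnE' : IsNilpotent E' := by
    refine isNilpotent_of_det E' (p := m) fun u => ?_
    have hm : u • (1 : Matrix (Fin m) (Fin m) ℂ) - E'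
        = u • 1 + (0:ℂ) • H' + (-1 : ℂ) • E' + (0:ℂ) • F' := by module
    rw [hm, hψ u 0 (-1) 0 0 (by ring)]
    simp
  have hnF' : IsNilpotent F' := by
    refine isNilpotent_of_det F' (p := m) fun u => ?_
    have hm : u • (1 : Matrix (Fin m) (Fin m) ℂ) - F'
        = u • 1 + (0:ℂ) • H' + (0:ℂ) • E' + (-1 : ℂ) • F' := by module
    rw [hm, hψ u 0 0 (-1) 0 (by ring)]
    simp
  -- Kronecker power helpers
  have hkpow1 : ∀ (M : Matrix (Fin n) (Fin n) ℂ) (j : ℕ),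
      (M ⊗ₖ (1 : Matrix (Fin m) (Fin m) ℂ)) ^ j = (M ^ j) ⊗ₖ 1 := by
    intro M j
    induction j with
    | zero => simp [Matrix.one_kronecker_one]
    | succ j ih => rw [pow_succ, pow_succ, ih, ← Matrix.mul_kronecker_mul, Matrix.mul_one]
  have hkpow2 : ∀ (M : Matrix (Fin m) (Fin m) ℂ) (j : ℕ),
      ((1 : Matrix (Fin n) (Fin n) ℂ) ⊗ₖ M) ^ j = 1 ⊗ₖ (M ^ j) := by
    intro M j
    induction j with
    | zero => simp [Matrix.one_kronecker_one]
    | succ j ih => rw [pow_succ, pow_succ, ih, ← Matrix.mul_kronecker_mul, Matrix.mul_one]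
  have hnilk : ∀ (M : Matrix (Fin n) (Fin n) ℂ) (M' : Matrix (Fin m) (Fin m) ℂ),
      IsNilpotent M → IsNilpotent M' →
      IsNilpotent (M ⊗ₖ (1 : Matrix (Fin m) (Fin m) ℂ)
        + (1 : Matrix (Fin n) (Fin n) ℂ) ⊗ₖ M') := by
    intro M M' ⟨j, hj⟩ ⟨j', hj'⟩
    have hcomm : Commute (M ⊗ₖ (1 : Matrix (Fin m) (Fin m) ℂ))
        ((1 : Matrix (Fin n) (Fin n) ℂ) ⊗ₖ M') := by
      show _ * _ = _ * _
      rw [← Matrix.mul_kronecker_mul, ← Matrix.mul_kronecker_mul]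
      simp
    refine Commute.isNilpotent_add hcomm ⟨j, ?_⟩ ⟨j', ?_⟩
    · rw [hkpow1, hj, Matrix.zero_kronecker]
    · rw [hkpow2, hj', Matrix.kronecker_zero]
  -- sl2 relations for the tensor triple
  have rel1 : Y * Z - Z * Y = X := by
    have h1 : E * F = H + F * E := sub_eq_iff_eq_add.mp hEF
    have h2 : E' * F' = H' + F' * E' := sub_eq_iff_eq_add.mp hEF'
    rw [hY, hZ, hX]
    simp only [add_mul, mul_add, ← Matrix.mul_kronecker_mul, Matrix.one_mul, Matrix.mul_one,
      h1, h2, Matrix.add_kronecker, Matrix.kronecker_add]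
    abel
  have rel2 : X * Y - Y * X = (2 : ℂ) • Y := by
    have h1 : H * E = (2:ℂ) • E + E * H := sub_eq_iff_eq_add.mp hHE
    have h2 : H' * E' = (2:ℂ) • E' + E' * H' := sub_eq_iff_eq_add.mp hHE'
    rw [hX, hY]
    simp only [add_mul, mul_add, ← Matrix.mul_kronecker_mul, Matrix.one_mul, Matrix.mul_one,
      h1, h2, Matrix.add_kronecker, Matrix.kronecker_add, Matrix.smul_kronecker,
      Matrix.kronecker_smul, smul_add]
    abel
  have rel3 : X * Z - Z * X = (-2 : ℂ) • Z := by
    have h1 : H * F = (-2:ℂ) • F + F * H := sub_eq_iff_eq_add.mp hHF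
    have h2 : H' * F' = (-2:ℂ) • F' + F' * H' := sub_eq_iff_eq_add.mp hHF'
    rw [hX, hZ]
    simp only [add_mul, mul_add, ← Matrix.mul_kronecker_mul, Matrix.one_mul, Matrix.mul_one,
      h1, h2, Matrix.add_kronecker, Matrix.kronecker_add, Matrix.smul_kronecker,
      Matrix.kronecker_smul, smul_add]
    abel
  have hnY : IsNilpotent Y := by rw [hY]; exact hnilk E E' hnE hnE'
  have hnZ : IsNilpotent Z := by rw [hZ]; exact hnilk F F' hnF hnF'
  -- case s = 0
  rcases eq_or_ne s 0 with hs0 | hs0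
  · subst hs0
    have hs' : (0:ℂ) = z₁ ^ 2 + z₂ * z₃ := by simpa using hs
    have hnil1 : IsNilpotent (z₁ • H + z₂ • E + z₃ • F) := by
      refine isNilpotent_of_det _ (p := n) fun u => ?_
      have hm : u • (1 : Matrix (Fin n) (Fin n) ℂ) - (z₁ • H + z₂ • E + z₃ • F)
          = u • 1 + (-z₁) • H + (-z₂) • E + (-z₃) • F := by module
      rw [hm, hφ u (-z₁) (-z₂) (-z₃) 0 (by linear_combination hs')]
      simp
    have hnil2 : IsNilpotent (z₁ • H' + z₂ • E' + z₃ • F') := by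
      refine isNilpotent_of_det _ (p := m) fun u => ?_
      have hm : u • (1 : Matrix (Fin m) (Fin m) ℂ) - (z₁ • H' + z₂ • E' + z₃ • F')
          = u • 1 + (-z₁) • H' + (-z₂) • E' + (-z₃) • F' := by module
      rw [hm, hψ u (-z₁) (-z₂) (-z₃) 0 (by linear_combination hs')]
      simp
    have hkey : z₁ • X + z₂ • Y + z₃ • Z
        = (z₁ • H + z₂ • E + z₃ • F) ⊗ₖ (1 : Matrix (Fin m) (Fin m) ℂ)
          + (1 : Matrix (Fin n) (Fin n) ℂ) ⊗ₖ (z₁ • H' + z₂ • E' + z₃ • F') := by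
      rw [hX, hY, hZ]
      simp only [Matrix.add_kronecker, Matrix.kronecker_add, Matrix.smul_kronecker,
        Matrix.kronecker_smul, smul_add]
      abel
    have hnilN : IsNilpotent (z₁ • X + z₂ • Y + z₃ • Z) := by
      rw [hkey]; exact hnilk _ _ hnil1 hnil2
    have hm2 : z₀ • (1 : Matrix (Fin n × Fin m) (Fin n × Fin m) ℂ) + z₁ • X + z₂ • Y + z₃ • Z
        = z₀ • 1 - (-(z₁ • X + z₂ • Y + z₃ • Z)) := by module
    rw [hm2, det_of_isNilpotent hnilN.neg z₀]
    simp [Finset.prod_const, Finset.card_univ]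
    ring
  · -- s ≠ 0
    have hbase : (z₀ • (1 : Matrix (Fin n × Fin m) (Fin n × Fin m) ℂ)
          + s • X + (0:ℂ) • Y + (0:ℂ) • Z).det
        = ∏ i, ∏ j, (z₀ + (α i + β j) * s) := by
      have hmat : z₀ • (1 : Matrix (Fin n × Fin m) (Fin n × Fin m) ℂ)
            + s • X + (0:ℂ) • Y + (0:ℂ) • Z
          = (-s) • ((-(z₀ * s⁻¹)) • 1 - X) := by
        rw [smul_sub, smul_smul]
        have hc : -s * -(z₀ * s⁻¹) = z₀ := by field_simp
        rw [hc]
        module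
      rw [hmat, Matrix.det_smul, hXdet]
      rw [Fintype.card_prod, Fintype.card_fin, Fintype.card_fin]
      have hpow : ((-s) ^ (n*m) : ℂ) = ∏ _i : Fin n, ∏ _j : Fin m, (-s) := by
        simp [Finset.prod_const, Finset.card_univ, ← pow_mul]
        rw [Nat.mul_comm]
      rw [hpow, ← Finset.prod_mul_distrib]
      refine Finset.prod_congr rfl fun i _ => ?_
      rw [← Finset.prod_mul_distrib]
      refine Finset.prod_congr rfl fun j _ => ?_
      field_simp
      ring
    have dcong : ∀ a a' b b' c c' : ℂ, a = a' → b = b' → c = c' →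
        (z₀ • (1 : Matrix (Fin n × Fin m) (Fin n × Fin m) ℂ) + a • X + b • Y + c • Z).det
          = (z₀ • (1 : Matrix (Fin n × Fin m) (Fin n × Fin m) ℂ)
              + a' • X + b' • Y + c' • Z).det := by
      rintro a a' b b' c c' rfl rfl rfl
      rfl
    have estep := fun a b c u' => sl2_e_move rel1 rel2 hnY z₀ a b c u'
    have fstep := fun a b c v' => sl2_f_move rel1 rel3 hnZ z₀ a b c v'
    by_cases hz₂ : z₂ = 0
    · -- z₂ = 0 : then z₁ = ± s
      have hz₁sq : (z₁ - s) * (z₁ + s) = 0 := by linear_combination -hs - z₃ * hz₂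
      rcases mul_eq_zero.mp hz₁sq with h | h
      · -- z₁ = s
        have hz₁ : z₁ = s := sub_eq_zero.mp h
        have chain : (z₀ • (1 : Matrix (Fin n × Fin m) (Fin n × Fin m) ℂ)
              + s • X + (0:ℂ) • Y + (0:ℂ) • Z).det
            = (z₀ • (1 : Matrix (Fin n × Fin m) (Fin n × Fin m) ℂ)
              + z₁ • X + z₂ • Y + z₃ • Z).det := by
          calc (z₀ • (1 : Matrix (Fin n × Fin m) (Fin n × Fin m) ℂ)
                + s • X + (0:ℂ) • Y + (0:ℂ) • Z).det
              = (z₀ • (1 : Matrix (Fin n × Fin m) (Fin n × Fin m) ℂ)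
                + s • X + (0:ℂ) • Y + z₃ • Z).det := by
                rw [fstep s 0 0 (z₃ / (2*s))]
                refine dcong _ _ _ _ _ _ (by ring) (by ring) ?_
                field_simp
                ring
            _ = _ := dcong _ _ _ _ _ _ hz₁.symm hz₂.symm rfl
        rw [← chain]
        exact hbase
      · -- z₁ = -s
        have hz₁ : z₁ = -s := eq_neg_of_add_eq_zero_left h
        have chain : (z₀ • (1 : Matrix (Fin n × Fin m) (Fin n × Fin m) ℂ)
              + s • X + (0:ℂ) • Y + (0:ℂ) • Z).det
            = (z₀ • (1 : Matrix (Fin n × Fin m) (Fin n × Fin m) ℂ)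
              + z₁ • X + z₂ • Y + z₃ • Z).det := by
          calc (z₀ • (1 : Matrix (Fin n × Fin m) (Fin n × Fin m) ℂ)
                + s • X + (0:ℂ) • Y + (0:ℂ) • Z).det
              = (z₀ • (1 : Matrix (Fin n × Fin m) (Fin n × Fin m) ℂ)
                + s • X + (-2*s) • Y + (0:ℂ) • Z).det := by
                rw [estep s 0 0 1]
                exact dcong _ _ _ _ _ _ (by ring) (by ring) (by ring)
            _ = (z₀ • (1 : Matrix (Fin n × Fin m) (Fin n × Fin m) ℂ)
                + (-s) • X + (-2*s) • Y + (0:ℂ) • Z).det := by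
                rw [fstep s (-2*s) 0 (-1)]
                exact dcong _ _ _ _ _ _ (by ring) (by ring) (by ring)
            _ = (z₀ • (1 : Matrix (Fin n × Fin m) (Fin n × Fin m) ℂ)
                + (-s) • X + (0:ℂ) • Y + (0:ℂ) • Z).det := by
                rw [estep (-s) (-2*s) 0 1]
                exact dcong _ _ _ _ _ _ (by ring) (by ring) (by ring)
            _ = (z₀ • (1 : Matrix (Fin n × Fin m) (Fin n × Fin m) ℂ)
                + (-s) • X + (0:ℂ) • Y + z₃ • Z).det := by
                rw [fstep (-s) 0 0 (-z₃ / (2*s))]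
                refine dcong _ _ _ _ _ _ (by ring) (by ring) ?_
                field_simp
                ring
            _ = _ := dcong _ _ _ _ _ _ hz₁.symm hz₂.symm rfl
        rw [← chain]
        exact hbase
    · -- z₂ ≠ 0
      set u : ℂ := -z₂ / (2 * s) with hu
      set v : ℂ := (s - z₁) / z₂ with hv
      have c1 : 0 - 2 * u * s - u ^ 2 * 0 = z₂ := by
        rw [hu]; field_simp; ring
      have c2 : s - v * z₂ = z₁ := by
        rw [hv]; field_simp; ring
      have c3 : 0 + 2 * v * s - v ^ 2 * z₂ = z₃ := by
        rw [hv]; field_simp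
        linear_combination hs
      have chain : (z₀ • (1 : Matrix (Fin n × Fin m) (Fin n × Fin m) ℂ)
            + s • X + (0:ℂ) • Y + (0:ℂ) • Z).det
          = (z₀ • (1 : Matrix (Fin n × Fin m) (Fin n × Fin m) ℂ)
            + z₁ • X + z₂ • Y + z₃ • Z).det := by
        calc (z₀ • (1 : Matrix (Fin n × Fin m) (Fin n × Fin m) ℂ)
              + s • X + (0:ℂ) • Y + (0:ℂ) • Z).det
            = (z₀ • (1 : Matrix (Fin n × Fin m) (Fin n × Fin m) ℂ)
              + s • X + z₂ • Y + (0:ℂ) • Z).det := by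
              rw [estep s 0 0 u]
              exact dcong _ _ _ _ _ _ (by ring) c1 (by ring)
          _ = (z₀ • (1 : Matrix (Fin n × Fin m) (Fin n × Fin m) ℂ)
              + z₁ • X + z₂ • Y + z₃ • Z).det := by
              rw [fstep s z₂ 0 v]
              exact dcong _ _ _ _ _ _ c2 rfl c3
      rw [← chain]
      exact hbase
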